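/- Let f, g be real polynomials (viewed as smooth functions ℝ → ℝ) with g(r) > 0 for all r in a closed interval U, and suppose g·(g·f''' - f·g''') - 3·g''·(g·f' - f·g') = 0 on U. Define Δ_h(r) = g·(g·f'' - f·g'') - 2·g'·(g·f' - f·g'). Then Δ_h is constant on U, and if Δ_h(r0) > 0 for some r0 ∈ U then h = f/g is convex on U, while if Δ_h(r0) < 0 then h is concave on U. -/

import Mathlib

open Polynomial Set

/-- The discriminant-type expression `Δ_h = g(g f'' - f g'') - 2 g'(g f' - f g')`
evaluated at `r`, for polynomials `f, g`. -/
noncomputable def DeltaH (f g : Polynomial ℝ) (r : ℝ) : ℝ :=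
  (g.eval r) * ((g.eval r) * ((derivative (derivative f)).eval r)
      - (f.eval r) * ((derivative (derivative g)).eval r))
    - 2 * ((derivative g).eval r) * ((g.eval r) * ((derivative f).eval r)
      - (f.eval r) * ((derivative g).eval r))

noncomputable def Dpoly (f g : Polynomial ℝ) : Polynomial ℝ :=
  g * (g * derivative (derivative f) - f * derivative (derivative g))
    - 2 * derivative g * (g * derivative f - f * derivative g)

lemma DeltaH_eq (f g : Polynomial ℝ) (r : ℝ) : DeltaH f g r = (Dpoly f g).eval r := by
  simp [DeltaH, Dpoly]

lemma deriv_Dpoly (f g : Polynomial ℝ) :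
    derivative (Dpoly f g) =
      g * (g * derivative (derivative (derivative f))
          - f * derivative (derivative (derivative g)))
        - 3 * derivative (derivative g) * (g * derivative f - f * derivative g) := by
  simp only [Dpoly, derivative_sub, derivative_mul]
  ring_nf
  simp [derivative_ofNat]

lemma hasDerivAt_ratio (f g : Polynomial ℝ) (x : ℝ) (hx : g.eval x ≠ 0) :
    HasDerivAt (fun r => f.eval r / g.eval r)
      (((derivative f * g - f * derivative g).eval x) / (g.eval x)^2) x := by
  have h : HasDerivAt (fun r => f.eval r / g.eval r) _ x := (f.hasDerivAt x).div (g.hasDerivAt x) hx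
  convert h using 1
  simp

lemma hasDerivAt_ratio2 (f g : Polynomial ℝ) (x : ℝ) (hx : g.eval x ≠ 0) :
    HasDerivAt (fun r => ((derivative f * g - f * derivative g).eval r) / (g.eval r)^2)
      ((Dpoly f g).eval x / (g.eval x)^3) x := by
  set q : Polynomial ℝ := derivative f * g - f * derivative g with hq
  have hx2 : (g.eval x)^2 ≠ 0 := pow_ne_zero _ hx
  have hden : HasDerivAt (fun r => (g.eval r)^2) (2 * g.eval x ^ 1 * (derivative g).eval x) x :=
    (g.hasDerivAt x).pow 2
  have h : HasDerivAt (fun r => q.eval r / (g.eval r)^2) _ x := (q.hasDerivAt x).div hden hx2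
  convert h using 1
  have hq' : derivative q = derivative (derivative f) * g - f * derivative (derivative g) := by
    simp [hq, derivative_mul]; ring
  rw [Dpoly]
  field_simp
  simp [hq', hq]
  ring

theorem rational_convexity (f g : Polynomial ℝ) (a b : ℝ)
    (hg : ∀ r ∈ Set.Icc a b, 0 < g.eval r)
    (hcond : ∀ r ∈ Set.Icc a b,
      (g.eval r) * ((g.eval r) * ((derivative (derivative (derivative f))).eval r)
          - (f.eval r) * ((derivative (derivative (derivative g))).eval r))
        - 3 * ((derivative (derivative g)).eval r)
          * ((g.eval r) * ((derivative f).eval r)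
            - (f.eval r) * ((derivative g).eval r)) = 0) :
    (∀ r1 ∈ Set.Icc a b, ∀ r2 ∈ Set.Icc a b, DeltaH f g r1 = DeltaH f g r2) ∧
    (∀ r0 ∈ Set.Icc a b, 0 < DeltaH f g r0 →
      ConvexOn ℝ (Set.Icc a b) (fun r => f.eval r / g.eval r)) ∧
    (∀ r0 ∈ Set.Icc a b, DeltaH f g r0 < 0 →
      ConcaveOn ℝ (Set.Icc a b) (fun r => f.eval r / g.eval r)) := by
  -- constancy of DeltaH on Icc a b
  have hconst : ∀ x ∈ Set.Icc a b, (Dpoly f g).eval x = (Dpoly f g).eval a := by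
    apply constant_of_derivWithin_zero
    · exact (Dpoly f g).differentiable.differentiableOn
    · intro x hx
      have hab : a < b := lt_of_le_of_lt hx.1 hx.2
      have hx' : x ∈ Set.Icc a b := ⟨hx.1, hx.2.le⟩
      rw [((Dpoly f g).hasDerivAt x).hasDerivWithinAt.derivWithin
        ((uniqueDiffOn_Icc hab) x hx')]
      rw [deriv_Dpoly]
      have := hcond x hx'
      simpa using this
  have hDH : ∀ x ∈ Set.Icc a b, DeltaH f g x = DeltaH f g a := by
    intro x hx
    rw [DeltaH_eq, DeltaH_eq]
    exact hconst x hx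
  refine ⟨fun r1 h1 r2 h2 => by rw [hDH r1 h1, hDH r2 h2], ?_, ?_⟩
  · -- convex case
    intro r0 hr0 hpos
    apply convexOn_of_hasDerivWithinAt2_nonneg (convex_Icc a b)
      (f' := fun x => ((derivative f * g - f * derivative g).eval x) / (g.eval x)^2)
      (f'' := fun x => (Dpoly f g).eval x / (g.eval x)^3)
    · exact ContinuousOn.div (f.continuous.continuousOn) (g.continuous.continuousOn)
        (fun x hx => (hg x hx).ne')
    · intro x hx
      have hx' : x ∈ Set.Icc a b := interior_subset hx
      exact (hasDerivAt_ratio f g x (hg x hx').ne').hasDerivWithinAt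
    · intro x hx
      have hx' : x ∈ Set.Icc a b := interior_subset hx
      exact (hasDerivAt_ratio2 f g x (hg x hx').ne').hasDerivWithinAt
    · intro x hx
      have hx' : x ∈ Set.Icc a b := interior_subset hx
      have h1 : (Dpoly f g).eval x = DeltaH f g r0 := by
        rw [← DeltaH_eq, hDH x hx', ← hDH r0 hr0]
      rw [h1]
      exact (div_pos hpos (pow_pos (hg x hx') 3)).le
  · -- concave case
    intro r0 hr0 hneg
    apply concaveOn_of_hasDerivWithinAt2_nonpos (convex_Icc a b)
      (f' := fun x => ((derivative f * g - f * derivative g).eval x) / (g.eval x)^2)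
      (f'' := fun x => (Dpoly f g).eval x / (g.eval x)^3)
    · exact ContinuousOn.div (f.continuous.continuousOn) (g.continuous.continuousOn)
        (fun x hx => (hg x hx).ne')
    · intro x hx
      have hx' : x ∈ Set.Icc a b := interior_subset hx
      exact (hasDerivAt_ratio f g x (hg x hx').ne').hasDerivWithinAt
    · intro x hx
      have hx' : x ∈ Set.Icc a b := interior_subset hx
      exact (hasDerivAt_ratio2 f g x (hg x hx').ne').hasDerivWithinAt
    · intro x hx
      have hx' : x ∈ Set.Icc a b := interior_subset hx
      have h1 : (Dpoly f g).eval x = DeltaH f g r0 := by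
        rw [← DeltaH_eq, hDH x hx', ← hDH r0 hr0]
      rw [h1]
      have hgx : 0 < (g.eval x)^3 := pow_pos (hg x hx') 3
      exact div_nonpos_of_nonpos_of_nonneg hneg.le hgx.le
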